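/- Let d ≥ 1, t > 0 and f ∈ L²(ℝ^d, ℂ). Then for every z ∈ ℂ^d the integral F(z) = (2πt)^{-d/2} ∫_{ℝ^d} exp(−Σ_{j=1}^d (z_j − x_j)²/(2t)) f(x) dx converges absolutely, and the function F : ℂ^d → ℂ so defined is holomorphic on ℂ^d. (This is the statement that e^{tΔ/2}f admits an entire analytic continuation from ℝ^d to ℂ^d.) -/

import Mathlib

set_option maxHeartbeats 1000000
set_option synthInstance.maxHeartbeats 400000


open MeasureTheory Complex

/-- The time-`t` heat extension of `f : ℝ^d → ℂ` to `ℂ^d`: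
`F(z) = (2πt)^{-d/2} ∫_{ℝ^d} exp(−Σ_j (z_j − x_j)²/(2t)) f(x) dx`. -/
noncomputable def heatExt (d : ℕ) (t : ℝ) (f : EuclideanSpace ℝ (Fin d) → ℂ)
    (z : EuclideanSpace ℂ (Fin d)) : ℂ :=
  (((2 * Real.pi * t) ^ (-(d : ℝ) / 2) : ℝ) : ℂ) *
    ∫ x : EuclideanSpace ℝ (Fin d),
      Complex.exp (-∑ j : Fin d, (z j - (x j : ℂ)) ^ 2 / ((2 * t : ℝ) : ℂ)) * f x

lemma integrable_gauss_euclidean {d : ℕ} {b c : Fin d → ℂ} (hb : ∀ j, 0 < (b j).re) :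
    Integrable (fun x : EuclideanSpace ℝ (Fin d) =>
      Complex.exp (-∑ j, b j * (x j : ℂ) ^ 2 + ∑ j, c j * (x j : ℂ))) := by
  have hmp := EuclideanSpace.volume_preserving_symm_measurableEquiv_toLp (ι := Fin d)
  rw [← MeasurePreserving.integrable_comp_emb hmp.symm
    (MeasurableEquiv.measurableEmbedding _)]
  exact GaussianFourier.integrable_cexp_neg_sum_mul_add hb c

lemma exp_arg_split {d : ℕ} {s : ℂ} (hs : s ≠ 0) (z : EuclideanSpace ℂ (Fin d))
    (x : EuclideanSpace ℝ (Fin d)) :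
    (-∑ j, (z j - (x j : ℂ)) ^ 2 / s) =
      (-∑ j, (z j) ^ 2 / s) + (-∑ j, (1/s) * (x j : ℂ) ^ 2 + ∑ j, (2 * z j / s) * (x j : ℂ)) := by
  rw [← Finset.sum_neg_distrib, ← Finset.sum_neg_distrib, ← Finset.sum_neg_distrib,
    ← Finset.sum_add_distrib, ← Finset.sum_add_distrib]
  refine Finset.sum_congr rfl fun j _ => ?_
  field_simp
  ring

lemma integrable_kernel {d : ℕ} {s : ℝ} (hs : 0 < s) (z : EuclideanSpace ℂ (Fin d)) :
    Integrable (fun x : EuclideanSpace ℝ (Fin d) =>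
      Complex.exp (-∑ j, (z j - (x j : ℂ)) ^ 2 / (s : ℂ))) := by
  have hs' : (s : ℂ) ≠ 0 := by exact_mod_cast hs.ne'
  have : ∀ x : EuclideanSpace ℝ (Fin d),
      Complex.exp (-∑ j, (z j - (x j : ℂ)) ^ 2 / (s : ℂ)) =
        Complex.exp (-∑ j, (z j) ^ 2 / (s : ℂ)) *
          Complex.exp (-∑ j, (1/(s:ℂ)) * (x j : ℂ) ^ 2 + ∑ j, (2 * z j / s) * (x j : ℂ)) := by
    intro x
    rw [exp_arg_split hs' z x, Complex.exp_add]
  refine (Integrable.const_mul ?_ _).congr (Filter.Eventually.of_forall fun x => (this x).symm)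
  refine integrable_gauss_euclidean fun j => ?_
  simpa using by positivity

lemma kernel_continuous {d : ℕ} {t : ℝ} (z : EuclideanSpace ℂ (Fin d)) :
    Continuous (fun x : EuclideanSpace ℝ (Fin d) =>
      Complex.exp (-∑ j, (z j - (x j : ℂ)) ^ 2 / ((2 * t : ℝ) : ℂ))) := by
  fun_prop

lemma norm_exp_sq {d : ℕ} {t : ℝ} (ht : 0 < t) (z : EuclideanSpace ℂ (Fin d))
    (x : EuclideanSpace ℝ (Fin d)) :
    ‖Complex.exp (-∑ j, (z j - (x j : ℂ)) ^ 2 / ((2 * t : ℝ) : ℂ))‖ ^ 2 =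
      ‖Complex.exp (-∑ j, (z j - (x j : ℂ)) ^ 2 / ((t : ℝ) : ℂ))‖ := by
  rw [Complex.norm_exp, Complex.norm_exp,
    ← Real.exp_nat_mul]
  congr 1
  have : ((-∑ j, (z j - (x j : ℂ)) ^ 2 / ((t : ℝ) : ℂ))) =
      (2:ℂ) * (-∑ j, (z j - (x j : ℂ)) ^ 2 / ((2 * t : ℝ) : ℂ)) := by
    push_cast
    rw [mul_neg, Finset.mul_sum, neg_inj]
    refine Finset.sum_congr rfl fun j _ => ?_
    have h2t : (t : ℂ) ≠ 0 := by exact_mod_cast ht.ne'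
    field_simp
  rw [this]
  simp [Complex.mul_re, ← Complex.ofReal_pow]

lemma memL2_kernel {d : ℕ} {t : ℝ} (ht : 0 < t) (z : EuclideanSpace ℂ (Fin d)) :
    MemLp (fun x : EuclideanSpace ℝ (Fin d) =>
      Complex.exp (-∑ j, (z j - (x j : ℂ)) ^ 2 / ((2 * t : ℝ) : ℂ))) 2 volume := by
  rw [memLp_two_iff_integrable_sq_norm (kernel_continuous z).aestronglyMeasurable]
  refine ((integrable_kernel ht z).norm).congr
    (Filter.Eventually.of_forall fun x => ?_)
  exact (norm_exp_sq ht z x).symm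

lemma integrable_kernel_mul {d : ℕ} {t : ℝ} (ht : 0 < t) {f : EuclideanSpace ℝ (Fin d) → ℂ}
    (hf : MemLp f 2 volume) (z : EuclideanSpace ℂ (Fin d)) :
    Integrable (fun x : EuclideanSpace ℝ (Fin d) =>
      Complex.exp (-∑ j, (z j - (x j : ℂ)) ^ 2 / ((2 * t : ℝ) : ℂ)) * f x) volume := by
  rw [← memLp_one_iff_integrable]
  have := MemLp.smul (p := 2) (q := 2) (r := 1) hf (memL2_kernel ht z) (hpqr := ⟨by
    simp [ENNReal.inv_two_add_inv_two]⟩)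
  exact this

noncomputable def Dker (d : ℕ) (t : ℝ) (f : EuclideanSpace ℝ (Fin d) → ℂ)
    (x : EuclideanSpace ℝ (Fin d)) (z : EuclideanSpace ℂ (Fin d)) :
    EuclideanSpace ℂ (Fin d) →L[ℂ] ℂ :=
  f x • (Complex.exp (-∑ j, ((2*t:ℝ):ℂ)⁻¹ • ((z j - (x j:ℂ)) * (z j - (x j:ℂ)))) •
    (-(∑ j : Fin d, ((2*t:ℝ):ℂ)⁻¹ •
      ((z j - (x j:ℂ)) • (EuclideanSpace.proj j : EuclideanSpace ℂ (Fin d) →L[ℂ] ℂ) +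
       (z j - (x j:ℂ)) • (EuclideanSpace.proj j : EuclideanSpace ℂ (Fin d) →L[ℂ] ℂ)))))

lemma exp_arg_eq {d : ℕ} {t : ℝ} (ht : 0 < t) (z : EuclideanSpace ℂ (Fin d))
    (x : EuclideanSpace ℝ (Fin d)) :
    (-∑ j, ((2*t:ℝ):ℂ)⁻¹ • ((z j - (x j:ℂ)) * (z j - (x j:ℂ)))) =
      -∑ j : Fin d, (z j - (x j : ℂ)) ^ 2 / ((2 * t : ℝ) : ℂ) := by
  rw [neg_inj]
  refine Finset.sum_congr rfl fun j _ => ?_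
  rw [smul_eq_mul, pow_two, div_eq_inv_mul]

lemma hasFDerivAt_kernel {d : ℕ} {t : ℝ} (ht : 0 < t) (f : EuclideanSpace ℝ (Fin d) → ℂ)
    (x : EuclideanSpace ℝ (Fin d)) (z : EuclideanSpace ℂ (Fin d)) :
    HasFDerivAt (fun z : EuclideanSpace ℂ (Fin d) =>
      Complex.exp (-∑ j : Fin d, (z j - (x j : ℂ)) ^ 2 / ((2 * t : ℝ) : ℂ)) * f x)
      (Dker d t f x z) z := by
  have h2 : ∀ j : Fin d, HasFDerivAt (fun z : EuclideanSpace ℂ (Fin d) => z j - (x j : ℂ))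
      (EuclideanSpace.proj j : EuclideanSpace ℂ (Fin d) →L[ℂ] ℂ) z :=
    fun j => (PiLp.hasFDerivAt_apply 2 z j).sub_const _
  have h4 : ∀ j : Fin d, HasFDerivAt
      (fun z : EuclideanSpace ℂ (Fin d) =>
        ((2*t:ℝ):ℂ)⁻¹ • ((z j - (x j:ℂ)) * (z j - (x j:ℂ))))
      (((2*t:ℝ):ℂ)⁻¹ •
        ((z j - (x j:ℂ)) • (EuclideanSpace.proj j : EuclideanSpace ℂ (Fin d) →L[ℂ] ℂ) +
         (z j - (x j:ℂ)) • (EuclideanSpace.proj j : EuclideanSpace ℂ (Fin d) →L[ℂ] ℂ))) z :=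
    fun j => by have := ((h2 j).mul (h2 j)).const_smul (((2*t:ℝ):ℂ)⁻¹); exact this
  have h5 := HasFDerivAt.fun_sum (u := Finset.univ) (fun j _ => h4 j)
  have h8 := ((h5.fun_neg).cexp).mul_const (f x)
  refine h8.congr_of_eventuallyEq ?_
  filter_upwards with w
  rw [exp_arg_eq ht w x]

lemma euclidean_coord_le {𝕜 : Type*} [RCLike 𝕜] {d : ℕ} (x : EuclideanSpace 𝕜 (Fin d))
    (j : Fin d) : ‖x j‖ ≤ ‖x‖ := by
  have h1 : ‖x j‖ ^ 2 ≤ ∑ i, ‖x i‖ ^ 2 :=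
    Finset.single_le_sum (f := fun i => ‖x i‖ ^ 2) (fun i _ => sq_nonneg _)
      (Finset.mem_univ j)
  calc ‖x j‖ = Real.sqrt (‖x j‖ ^ 2) := (Real.sqrt_sq (norm_nonneg _)).symm
    _ ≤ Real.sqrt (∑ i, ‖x i‖ ^ 2) := Real.sqrt_le_sqrt h1
    _ = ‖x‖ := (EuclideanSpace.norm_eq x).symm

lemma norm_proj_le {d : ℕ} (j : Fin d) :
    ‖(EuclideanSpace.proj j : EuclideanSpace ℂ (Fin d) →L[ℂ] ℂ)‖ ≤ 1 := by
  refine ContinuousLinearMap.opNorm_le_bound _ zero_le_one fun w => ?_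
  rw [one_mul]
  exact euclidean_coord_le w j

lemma norm_sq_eq_sum {d : ℕ} (x : EuclideanSpace ℝ (Fin d)) :
    ‖x‖ ^ 2 = ∑ i, (x i) ^ 2 := by
  rw [EuclideanSpace.norm_eq, Real.sq_sqrt (Finset.sum_nonneg fun i _ => sq_nonneg _)]
  exact Finset.sum_congr rfl fun i _ => by simp [Real.norm_eq_abs, sq_abs]

/-- real part estimate for the exponent -/
lemma re_exponent_le {d : ℕ} {t : ℝ} (ht : 0 < t) {B : ℝ}
    (z : EuclideanSpace ℂ (Fin d)) (hz : ‖z‖ ≤ B)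
    (x : EuclideanSpace ℝ (Fin d)) :
    (-∑ j : Fin d, (z j - (x j : ℂ)) ^ 2 / ((2 * t : ℝ) : ℂ)).re ≤
      3 * d * B ^ 2 / (2 * t) - ‖x‖ ^ 2 / (4 * t) := by
  have h2t : (0:ℝ) < 2 * t := by linarith
  have hre : ∀ j : Fin d, ((z j - (x j : ℂ)) ^ 2 / ((2 * t : ℝ) : ℂ)).re =
      (((z j).re - x j) ^ 2 - (z j).im ^ 2) / (2 * t) := by
    intro j
    rw [Complex.div_ofReal_re]
    congr 1
    simp only [pow_two, Complex.mul_re, Complex.sub_re, Complex.sub_im, Complex.ofReal_re,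
      Complex.ofReal_im]
    ring
  have hterm : ∀ j : Fin d, (x j) ^ 2 / 2 - 3 * B ^ 2 ≤
      (((z j).re - x j) ^ 2 - (z j).im ^ 2) := by
    intro j
    have ha : |(z j).re| ≤ B := (Complex.abs_re_le_norm (z j)).trans
      ((euclidean_coord_le z j).trans hz)
    have hb : |(z j).im| ≤ B := (Complex.abs_im_le_norm (z j)).trans
      ((euclidean_coord_le z j).trans hz)
    have ha2 : (z j).re ^ 2 ≤ B ^ 2 := sq_le_sq' (neg_le_of_abs_le ha) (le_of_abs_le ha)
    have hb2 : (z j).im ^ 2 ≤ B ^ 2 := sq_le_sq' (neg_le_of_abs_le hb) (le_of_abs_le hb)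
    nlinarith [sq_nonneg (x j - 2 * (z j).re), sq_nonneg (x j)]
  rw [Complex.neg_re, Complex.re_sum]
  simp only [hre]
  rw [← Finset.sum_div]
  have hsum : (∑ j : Fin d, ((x j) ^ 2 / 2 - 3 * B ^ 2)) ≤
      ∑ j : Fin d, (((z j).re - x j) ^ 2 - (z j).im ^ 2) :=
    Finset.sum_le_sum fun j _ => hterm j
  have hx2 : (∑ j : Fin d, ((x j) ^ 2 / 2 - 3 * B ^ 2)) = ‖x‖ ^ 2 / 2 - 3 * d * B ^ 2 := by
    rw [Finset.sum_sub_distrib, ← Finset.sum_div, ← norm_sq_eq_sum]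
    simp [Finset.card_univ]
    ring
  have h3 : ‖x‖ ^ 2 / 2 - 3 * d * B ^ 2 ≤ ∑ j : Fin d, (((z j).re - x j) ^ 2 - (z j).im ^ 2) :=
    hx2 ▸ hsum
  have h4 : (-(∑ i : Fin d, (((z i).re - x i) ^ 2 - (z i).im ^ 2))) / (2 * t) ≤
      (3 * d * B ^ 2 - ‖x‖ ^ 2 / 2) / (2 * t) := by
    apply (div_le_div_iff_of_pos_right h2t).mpr
    linarith
  calc -((∑ i : Fin d, (((z i).re - x i) ^ 2 - (z i).im ^ 2)) / (2 * t))
      = (-(∑ i : Fin d, (((z i).re - x i) ^ 2 - (z i).im ^ 2))) / (2 * t) := (neg_div _ _).symm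
    _ ≤ (3 * d * B ^ 2 - ‖x‖ ^ 2 / 2) / (2 * t) := h4
    _ = 3 * d * B ^ 2 / (2 * t) - ‖x‖ ^ 2 / (4 * t) := by
        field_simp
        ring

lemma poly_gauss {c B s : ℝ} (hc : 0 < c) (hB : 0 ≤ B) (hs : 0 ≤ s) :
    (B + s) * Real.exp (-(c * s ^ 2)) ≤ B + Real.sqrt c⁻¹ := by
  have he1 : Real.exp (-(c * s ^ 2)) ≤ 1 := by
    rw [Real.exp_le_one_iff]
    nlinarith
  have hepos := Real.exp_pos (-(c * s ^ 2))
  have hmain : s * Real.exp (-(c * s ^ 2)) ≤ Real.sqrt c⁻¹ := by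
    rcases le_or_gt s (Real.sqrt c⁻¹) with h | h
    · calc s * Real.exp (-(c * s ^ 2)) ≤ s * 1 := mul_le_mul_of_nonneg_left he1 hs
        _ = s := mul_one s
        _ ≤ Real.sqrt c⁻¹ := h
    · have hq : 0 < Real.sqrt c⁻¹ := Real.sqrt_pos.mpr (inv_pos.mpr hc)
      have hs0 : 0 < s := hq.trans h
      have hsq : Real.sqrt c⁻¹ * Real.sqrt c⁻¹ = c⁻¹ :=
        Real.mul_self_sqrt (inv_nonneg.mpr hc.le)
      have hcs : 1 < c * s ^ 2 := by
        have h2 : c⁻¹ < s ^ 2 := by nlinarith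
        have := (mul_lt_mul_iff_right₀ hc).mpr h2
        rwa [mul_inv_cancel₀ hc.ne'] at this
      have hexp : Real.exp (-(c * s ^ 2)) ≤ (c * s ^ 2)⁻¹ := by
        rw [Real.exp_neg]
        apply inv_anti₀ (by linarith)
        have := Real.add_one_le_exp (c * s ^ 2)
        linarith
      calc s * Real.exp (-(c * s ^ 2)) ≤ s * (c * s ^ 2)⁻¹ :=
            mul_le_mul_of_nonneg_left hexp hs0.le
        _ = 1 / (c * s) := by field_simp
        _ ≤ Real.sqrt c⁻¹ := by
            rw [div_le_iff₀ (by positivity)]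
            have h1 : Real.sqrt c⁻¹ * (c * Real.sqrt c⁻¹) = 1 := by
              rw [← mul_assoc, mul_comm (Real.sqrt c⁻¹) c, mul_assoc, hsq,
                mul_inv_cancel₀ hc.ne']
            have h2 : Real.sqrt c⁻¹ * (c * Real.sqrt c⁻¹) ≤ Real.sqrt c⁻¹ * (c * s) := by
              refine mul_le_mul_of_nonneg_left ?_ hq.le
              exact mul_le_mul_of_nonneg_left h.le hc.le
            linarith
  nlinarith

lemma integrable_gauss_real {d : ℕ} {a : ℝ} (ha : 0 < a) :
    Integrable (fun x : EuclideanSpace ℝ (Fin d) => Real.exp (-(a * ‖x‖ ^ 2))) := by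
  have h := (GaussianFourier.integrable_cexp_neg_mul_sq_norm_add
    (V := EuclideanSpace ℝ (Fin d)) (b := (a : ℂ)) (by exact_mod_cast ha) 0 0).norm
  refine h.congr (Filter.Eventually.of_forall fun x => ?_)
  show ‖cexp _‖ = _
  rw [Complex.norm_exp]
  congr 1
  simp [Complex.mul_re, ← Complex.ofReal_pow]

lemma memL2_envelope {d : ℕ} {t : ℝ} (ht : 0 < t) :
    MemLp (fun x : EuclideanSpace ℝ (Fin d) => Real.exp (-(‖x‖ ^ 2 / (8 * t)))) 2 volume := by
  have hcont : Continuous (fun x : EuclideanSpace ℝ (Fin d) =>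
      Real.exp (-(‖x‖ ^ 2 / (8 * t)))) := by fun_prop
  rw [memLp_two_iff_integrable_sq hcont.aestronglyMeasurable]
  refine (integrable_gauss_real (a := 1 / (4 * t)) (by positivity)).congr
    (Filter.Eventually.of_forall fun x => ?_)
  show Real.exp (-(1 / (4 * t) * ‖x‖ ^ 2)) = Real.exp (-(‖x‖ ^ 2 / (8 * t))) ^ 2
  rw [← Real.exp_nat_mul]
  congr 1
  field_simp
  ring

lemma norm_Dker_le {d : ℕ} {t : ℝ} (ht : 0 < t) (f : EuclideanSpace ℝ (Fin d) → ℂ)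
    (x : EuclideanSpace ℝ (Fin d)) {z : EuclideanSpace ℂ (Fin d)} {B : ℝ}
    (hB : 0 ≤ B) (hz : ‖z‖ ≤ B) :
    ‖Dker d t f x z‖ ≤ ‖f x‖ *
      (Real.exp (3 * d * B ^ 2 / (2 * t) - ‖x‖ ^ 2 / (4 * t)) * ((d / t) * (B + ‖x‖))) := by
  rw [Dker]
  refine le_trans (ContinuousLinearMap.opNorm_smul_le _ _) ?_
  refine mul_le_mul_of_nonneg_left ?_ (norm_nonneg (f x))
  refine le_trans (ContinuousLinearMap.opNorm_smul_le _ _) ?_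
  have hE : ‖Complex.exp (-∑ j, ((2*t:ℝ):ℂ)⁻¹ • ((z j - (x j:ℂ)) * (z j - (x j:ℂ))))‖ ≤
      Real.exp (3 * d * B ^ 2 / (2 * t) - ‖x‖ ^ 2 / (4 * t)) := by
    rw [exp_arg_eq ht z x, Complex.norm_exp]
    exact Real.exp_le_exp.mpr (re_exponent_le ht z hz x)
  have hM : ‖-(∑ j : Fin d, ((2*t:ℝ):ℂ)⁻¹ •
      ((z j - (x j:ℂ)) • (EuclideanSpace.proj j : EuclideanSpace ℂ (Fin d) →L[ℂ] ℂ) +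
       (z j - (x j:ℂ)) • (EuclideanSpace.proj j : EuclideanSpace ℂ (Fin d) →L[ℂ] ℂ)))‖ ≤
      (d / t) * (B + ‖x‖) := by
    rw [norm_neg]
    have hterm : ∀ j : Fin d, ‖((2*t:ℝ):ℂ)⁻¹ •
        ((z j - (x j:ℂ)) • (EuclideanSpace.proj j : EuclideanSpace ℂ (Fin d) →L[ℂ] ℂ) +
         (z j - (x j:ℂ)) • (EuclideanSpace.proj j : EuclideanSpace ℂ (Fin d) →L[ℂ] ℂ))‖ ≤
        (2 * t)⁻¹ * (2 * (B + ‖x‖)) := by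
      intro j
      have hc : ‖((2*t:ℝ):ℂ)⁻¹‖ = (2 * t)⁻¹ := by
        rw [norm_inv, Complex.norm_real, Real.norm_eq_abs, abs_of_pos (by linarith)]
      refine le_trans (ContinuousLinearMap.opNorm_smul_le _ _) ?_
      rw [hc]
      refine mul_le_mul_of_nonneg_left ?_ (by positivity)
      have hu : ‖z j - (x j : ℂ)‖ ≤ B + ‖x‖ := by
        refine (norm_sub_le _ _).trans ?_
        have h1 : ‖z j‖ ≤ B := (euclidean_coord_le z j).trans hz
        have h2 : ‖(x j : ℂ)‖ ≤ ‖x‖ := by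
          rw [Complex.norm_real]
          exact euclidean_coord_le x j
        linarith
      have hp : ‖(z j - (x j:ℂ)) •
          (EuclideanSpace.proj j : EuclideanSpace ℂ (Fin d) →L[ℂ] ℂ)‖ ≤ B + ‖x‖ := by
        refine le_trans (ContinuousLinearMap.opNorm_smul_le _ _) ?_
        calc ‖z j - (x j:ℂ)‖ * ‖(EuclideanSpace.proj j : EuclideanSpace ℂ (Fin d) →L[ℂ] ℂ)‖
            ≤ (B + ‖x‖) * 1 := by
              refine mul_le_mul hu (norm_proj_le j) (norm_nonneg _) ?_
              positivity
          _ = B + ‖x‖ := mul_one _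
      calc ‖_ + _‖ ≤ ‖(z j - (x j:ℂ)) •
            (EuclideanSpace.proj j : EuclideanSpace ℂ (Fin d) →L[ℂ] ℂ)‖ +
            ‖(z j - (x j:ℂ)) •
            (EuclideanSpace.proj j : EuclideanSpace ℂ (Fin d) →L[ℂ] ℂ)‖ := norm_add_le _ _
        _ ≤ 2 * (B + ‖x‖) := by linarith
    calc ‖∑ j : Fin d, _‖ ≤ ∑ j : Fin d, ((2 * t)⁻¹ * (2 * (B + ‖x‖))) :=
          (norm_sum_le _ _).trans (Finset.sum_le_sum fun j _ => hterm j)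
      _ = d * ((2 * t)⁻¹ * (2 * (B + ‖x‖))) := by
          rw [Finset.sum_const, Finset.card_univ, Fintype.card_fin, nsmul_eq_mul]
      _ = (d / t) * (B + ‖x‖) := by
          field_simp
  exact mul_le_mul hE hM (norm_nonneg _) (Real.exp_pos _).le

lemma scalar_bound {t B s : ℝ} (ht : 0 < t) (hB : 0 ≤ B) (hs : 0 ≤ s) (C : ℝ) :
    Real.exp (C - s ^ 2 / (4 * t)) * (B + s) ≤
      Real.exp C * ((B + Real.sqrt (8 * t)) * Real.exp (-(s ^ 2 / (8 * t)))) := by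
  have hsplit : C - s ^ 2 / (4 * t) = C + -((8 * t)⁻¹ * s ^ 2) + -(s ^ 2 / (8 * t)) := by
    field_simp
    ring
  rw [hsplit, Real.exp_add, Real.exp_add]
  have hpg : (B + s) * Real.exp (-((8 * t)⁻¹ * s ^ 2)) ≤ B + Real.sqrt (8 * t) := by
    have := poly_gauss (c := (8 * t)⁻¹) (by positivity) hB hs
    rwa [inv_inv] at this
  calc Real.exp C * Real.exp (-((8 * t)⁻¹ * s ^ 2)) * Real.exp (-(s ^ 2 / (8 * t))) * (B + s)
      = Real.exp C * (((B + s) * Real.exp (-((8 * t)⁻¹ * s ^ 2))) *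
          Real.exp (-(s ^ 2 / (8 * t)))) := by ring
    _ ≤ Real.exp C * ((B + Real.sqrt (8 * t)) * Real.exp (-(s ^ 2 / (8 * t)))) := by
        refine mul_le_mul_of_nonneg_left ?_ (Real.exp_pos C).le
        exact mul_le_mul_of_nonneg_right hpg (Real.exp_pos _).le

lemma master_bound {d : ℕ} {t : ℝ} (ht : 0 < t) (f : EuclideanSpace ℝ (Fin d) → ℂ)
    (x : EuclideanSpace ℝ (Fin d)) {z : EuclideanSpace ℂ (Fin d)} {B : ℝ}
    (hB : 0 ≤ B) (hz : ‖z‖ ≤ B) :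
    ‖Dker d t f x z‖ ≤
      (Real.exp (3 * d * B ^ 2 / (2 * t)) * ((d / t) * (B + Real.sqrt (8 * t)))) *
        (Real.exp (-(‖x‖ ^ 2 / (8 * t))) * ‖f x‖) := by
  refine (norm_Dker_le ht f x hB hz).trans ?_
  have key := scalar_bound (B := B) (s := ‖x‖) ht hB (norm_nonneg x)
    (3 * d * B ^ 2 / (2 * t))
  calc ‖f x‖ * (Real.exp (3 * d * B ^ 2 / (2 * t) - ‖x‖ ^ 2 / (4 * t)) * ((d / t) * (B + ‖x‖)))
      = ((d : ℝ) / t * ‖f x‖) *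
          (Real.exp (3 * d * B ^ 2 / (2 * t) - ‖x‖ ^ 2 / (4 * t)) * (B + ‖x‖)) := by ring
    _ ≤ ((d : ℝ) / t * ‖f x‖) *
          (Real.exp (3 * d * B ^ 2 / (2 * t)) *
            ((B + Real.sqrt (8 * t)) * Real.exp (-(‖x‖ ^ 2 / (8 * t))))) := by
        refine mul_le_mul_of_nonneg_left key (by positivity)
    _ = (Real.exp (3 * d * B ^ 2 / (2 * t)) * ((d / t) * (B + Real.sqrt (8 * t)))) *
          (Real.exp (-(‖x‖ ^ 2 / (8 * t))) * ‖f x‖) := by ring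

/-- For any `f ∈ L²(ℝ^d)`, the integral defining the time-`t` heat extension of `f`
converges absolutely at every `z ∈ ℂ^d`, and the resulting function is holomorphic
on all of `ℂ^d`. -/
theorem heat_extension_entire (d : ℕ) (hd : 1 ≤ d) (t : ℝ) (ht : 0 < t)
    (f : EuclideanSpace ℝ (Fin d) → ℂ)
    (hf : MemLp f 2 (volume : Measure (EuclideanSpace ℝ (Fin d)))) :
    (∀ z : EuclideanSpace ℂ (Fin d),
      Integrable (fun x : EuclideanSpace ℝ (Fin d) =>
        Complex.exp (-∑ j : Fin d, (z j - (x j : ℂ)) ^ 2 / ((2 * t : ℝ) : ℂ)) * f x) volume)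
    ∧ Differentiable ℂ (heatExt d t f) := by
  refine ⟨fun z => integrable_kernel_mul ht hf z, ?_⟩
  have hI : ∀ z₀ : EuclideanSpace ℂ (Fin d), HasFDerivAt
      (fun z : EuclideanSpace ℂ (Fin d) => ∫ x : EuclideanSpace ℝ (Fin d),
        Complex.exp (-∑ j : Fin d, (z j - (x j : ℂ)) ^ 2 / ((2 * t : ℝ) : ℂ)) * f x)
      (∫ x : EuclideanSpace ℝ (Fin d), Dker d t f x z₀) z₀ := by
    intro z₀
    set B : ℝ := ‖z₀‖ + 1 with hBdef
    have hB : 0 ≤ B := by positivity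
    set K₀ : ℝ := Real.exp (3 * d * B ^ 2 / (2 * t)) * ((d / t) * (B + Real.sqrt (8 * t)))
      with hK₀def
    refine hasFDerivAt_integral_of_dominated_of_fderiv_le (s := Metric.ball z₀ 1)
      (F' := fun z x => Dker d t f x z)
      (bound := fun x => K₀ * (Real.exp (-(‖x‖ ^ 2 / (8 * t))) * ‖f x‖))
      (Metric.ball_mem_nhds z₀ one_pos)
      (Filter.Eventually.of_forall fun z =>
        (integrable_kernel_mul ht hf z).aestronglyMeasurable)
      (integrable_kernel_mul ht hf z₀) ?_ ?_ ?_ ?_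
    · -- measurability of F' z₀
      have hG : Continuous (fun x : EuclideanSpace ℝ (Fin d) =>
          Complex.exp (-∑ j, ((2*t:ℝ):ℂ)⁻¹ • ((z₀ j - (x j:ℂ)) * (z₀ j - (x j:ℂ)))) •
          (-(∑ j : Fin d, ((2*t:ℝ):ℂ)⁻¹ •
            ((z₀ j - (x j:ℂ)) • (EuclideanSpace.proj j :
                EuclideanSpace ℂ (Fin d) →L[ℂ] ℂ) +
             (z₀ j - (x j:ℂ)) • (EuclideanSpace.proj j :
                EuclideanSpace ℂ (Fin d) →L[ℂ] ℂ))))) := by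
        fun_prop
      exact hf.aestronglyMeasurable.smul hG.aestronglyMeasurable
    · -- the uniform bound on the ball
      refine Filter.Eventually.of_forall fun x z hz => ?_
      have hzB : ‖z‖ ≤ B := by
        have h1 : dist z z₀ < 1 := Metric.mem_ball.mp hz
        have h2 : ‖z - z₀‖ < 1 := by rwa [dist_eq_norm] at h1
        calc ‖z‖ = ‖z₀ + (z - z₀)‖ := by rw [add_sub_cancel]
          _ ≤ ‖z₀‖ + ‖z - z₀‖ := norm_add_le _ _
          _ ≤ B := by simp only [hBdef]; linarith
      exact master_bound ht f x hB hzB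
    · -- integrability of the bound
      have h2 := MemLp.smul (p := 2) (q := 2) (r := 1) hf.norm (memL2_envelope ht)
        (hpqr := ⟨by simp [ENNReal.inv_two_add_inv_two]⟩)
      exact (memLp_one_iff_integrable.mp h2).const_mul K₀
    · exact Filter.Eventually.of_forall fun x z _ => hasFDerivAt_kernel ht f x z
  intro z₀
  have hd : DifferentiableAt ℂ (fun z : EuclideanSpace ℂ (Fin d) =>
      (((2 * Real.pi * t) ^ (-(d : ℝ) / 2) : ℝ) : ℂ) *
        ∫ x : EuclideanSpace ℝ (Fin d),
          Complex.exp (-∑ j : Fin d, (z j - (x j : ℂ)) ^ 2 / ((2 * t : ℝ) : ℂ)) * f x) z₀ :=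
    ((hI z₀).differentiableAt).const_mul _
  exact hd
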